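/- Under the SGD setting with β-strong convexity, E[‖ĝ_n‖²] ≤ G² for all n, and step sizes η_n = 1/(βn), every iterate satisfies E[‖θ_n − θ*‖²] ≤ 2G²/(β² n) for all n ≥ 1. -/

import Mathlib

open MeasureTheory
open scoped RealInnerProductSpace

lemma sgd_aux_orth {Ω : Type*} [m0 : MeasurableSpace Ω] {μ : Measure Ω} [IsProbabilityMeasure μ]
    {H : Type*} [NormedAddCommGroup H] [InnerProductSpace ℝ H] [CompleteSpace H]
    [MeasurableSpace H] [BorelSpace H]
    {m : MeasurableSpace Ω} (hm : m ≤ m0)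
    {Y : Ω → H} (hYmem : MemLp Y 2 μ) (hYint : Integrable Y μ)
    {X : Ω → H} (hXm : Measurable[m] X)
    (hX2 : Integrable (fun ω => ‖X ω‖ ^ 2) μ) :
    ∫ ω, ⟪Y ω, X ω⟫ ∂μ = ∫ ω, ⟪(μ[Y|m]) ω, X ω⟫ ∂μ ∧
      Integrable (fun ω => ⟪(μ[Y|m]) ω, X ω⟫) μ := by
  letI : MeasurableSpace Ω := m0
  haveI : IsFiniteMeasure (μ.trim hm) := isFiniteMeasure_trim hm
  have hY₀sm : StronglyMeasurable[m0] (hYmem.1.mk Y) := hYmem.1.stronglyMeasurable_mk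
  have hYae : Y =ᵐ[μ] hYmem.1.mk Y := hYmem.1.ae_eq_mk
  have hh₀sm : StronglyMeasurable[m] (μ[Y|m]) := stronglyMeasurable_condExp
  have hsep : TopologicalSpace.IsSeparable
      (Set.range (hYmem.1.mk Y) ∪ Set.range (μ[Y|m])) :=
    hY₀sm.isSeparable_range.union (hh₀sm.mono hm).isSeparable_range
  set K : Submodule ℝ H :=
    (Submodule.span ℝ (Set.range (hYmem.1.mk Y) ∪ Set.range (μ[Y|m]))).topologicalClosure
    with hKdef
  haveI : CompleteSpace K := (Submodule.isClosed_topologicalClosure _).completeSpace_coe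
  have hmemK : ∀ v ∈ Set.range (hYmem.1.mk Y) ∪ Set.range (μ[Y|m]), v ∈ K := fun v hv =>
    Submodule.le_topologicalClosure _ (Submodule.subset_span hv)
  have hproj : ∀ v ∈ K, ∀ x : H, ⟪v, ((Submodule.orthogonalProjection K x : H))⟫ = ⟪v, x⟫ := by
    intro v hv x
    have h1 : x - (Submodule.orthogonalProjection K x : H) ∈ Kᗮ :=
      Submodule.sub_starProjection_mem_orthogonal (K := K) x
    have h2 : ⟪v, x - (Submodule.orthogonalProjection K x : H)⟫ = 0 :=
      (Submodule.mem_orthogonal K _).mp h1 v hv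
    rw [inner_sub_right] at h2
    linarith
  set X' : Ω → H := fun ω => (Submodule.orthogonalProjection K (X ω) : H) with hX'def
  have hX'm : Measurable[m] X' :=
    (continuous_subtype_val.comp (Submodule.orthogonalProjection K).continuous).measurable.comp hXm
  have hX'sm : StronglyMeasurable[m] X' := by
    rw [stronglyMeasurable_iff_measurable_separable]
    refine ⟨hX'm, ?_⟩
    have hKsep : TopologicalSpace.IsSeparable (K : Set H) := by
      rw [hKdef, Submodule.topologicalClosure_coe]
      exact hsep.span.closure
    exact hKsep.mono (by rintro _ ⟨ω, rfl⟩; exact (Submodule.orthogonalProjection K (X ω)).2)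
  have hX'norm : ∀ ω, ‖X' ω‖ ≤ ‖X ω‖ := by
    intro ω
    calc ‖X' ω‖ = ‖Submodule.orthogonalProjection K (X ω)‖ := rfl
      _ ≤ ‖Submodule.orthogonalProjection K‖ * ‖X ω‖ := (Submodule.orthogonalProjection K).le_opNorm _
      _ ≤ 1 * ‖X ω‖ := by
          gcongr
          exact Submodule.orthogonalProjection_norm_le K
      _ = ‖X ω‖ := one_mul _
  have hX'asm : AEStronglyMeasurable X' μ := (hX'sm.mono hm).aestronglyMeasurable
  have hX'mem : MemLp X' 2 μ := by
    refine (memLp_two_iff_integrable_sq_norm hX'asm).mpr ?_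
    refine hX2.mono' ?_ ?_
    · have := hX'asm.norm.mul hX'asm.norm
      simpa [pow_two, Pi.mul_def] using this
    · filter_upwards with ω
      have h1 := hX'norm ω
      have h2 : (0:ℝ) ≤ ‖X' ω‖ := norm_nonneg _
      rw [Real.norm_eq_abs, abs_of_nonneg (by positivity)]
      exact pow_le_pow_left₀ h2 h1 2
  set Yl : Lp H 2 μ := hYmem.toLp Y with hYldef
  set Xl : Lp H 2 μ := hX'mem.toLp X' with hXldef
  have hYlae : Yl =ᵐ[μ] Y := hYmem.coeFn_toLp
  have hXlae : Xl =ᵐ[μ] X' := hX'mem.coeFn_toLp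
  have hXl' : AEStronglyMeasurable[m] Xl μ := ⟨X', hX'sm, hXlae⟩
  have hclae : ((condExpL2 H ℝ hm Yl : Lp H 2 μ) : Ω → H) =ᵐ[μ] (μ[Y|m]) := by
    refine ae_eq_of_forall_setIntegral_eq_of_sigmaFinite' hm
      (fun s hs hμs => integrableOn_condExpL2_of_measure_ne_top hm hμs.ne Yl)
      (fun s hs hμs => integrable_condExp.integrableOn)
      (fun s hs hμs => ?_) (aestronglyMeasurable_condExpL2 hm Yl)
      ⟨μ[Y|m], hh₀sm, Filter.EventuallyEq.rfl⟩
    rw [integral_condExpL2_eq hm Yl hs hμs.ne, setIntegral_condExp hm hYint hs]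
    exact setIntegral_congr_ae (hm s hs) (hYlae.mono fun ω hω _ => hω)
  have hinner := inner_condExpL2_eq_inner_fun (𝕜 := ℝ) hm Yl Xl hXl'
  have e1 : ∫ ω, ⟪Y ω, X ω⟫ ∂μ = ∫ ω, ⟪Y ω, X' ω⟫ ∂μ := by
    refine integral_congr_ae (hYae.mono fun ω hω => ?_)
    show ⟪Y ω, X ω⟫ = ⟪Y ω, X' ω⟫
    rw [hω]
    exact (hproj _ (hmemK _ (Or.inl ⟨ω, rfl⟩)) (X ω)).symm
  have e2 : ∫ ω, ⟪Y ω, X' ω⟫ ∂μ = ∫ ω, ⟪Yl ω, Xl ω⟫ ∂μ := by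
    refine integral_congr_ae ?_
    filter_upwards [hYlae, hXlae] with ω h1 h2
    rw [h1, h2]
  have e3 : ∫ ω, ⟪Yl ω, Xl ω⟫ ∂μ
      = ∫ ω, ⟪((condExpL2 H ℝ hm Yl : Lp H 2 μ)) ω, Xl ω⟫ ∂μ := by
    rw [← L2.inner_def, ← L2.inner_def]
    exact hinner.symm
  have e4 : ∫ ω, ⟪((condExpL2 H ℝ hm Yl : Lp H 2 μ)) ω, Xl ω⟫ ∂μ
      = ∫ ω, ⟪(μ[Y|m]) ω, X ω⟫ ∂μ := by
    refine integral_congr_ae ?_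
    filter_upwards [hclae, hXlae] with ω h1 h2
    rw [h1, h2]
    exact hproj _ (hmemK _ (Or.inr ⟨ω, rfl⟩)) (X ω)
  refine ⟨e1.trans (e2.trans (e3.trans e4)), ?_⟩
  refine (L2.integrable_inner (𝕜 := ℝ) (condExpL2 H ℝ hm Yl : Lp H 2 μ) Xl).congr ?_
  filter_upwards [hclae, hXlae] with ω h1 h2
  rw [h1, h2]
  exact hproj _ (hmemK _ (Or.inr ⟨ω, rfl⟩)) (X ω)

/-- **Lemma 1.** Under SGD with step sizes `η n = 1/(β n)` on a `β`-strongly convex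
function with minimizer `θ*`, if `E[‖ĝ n‖²] ≤ G²` for all `n`, then every iterate
satisfies `E[‖θ n − θ*‖²] ≤ 2 G² / (β² n)` for all `n ≥ 1`. -/
theorem sgd_iterate_distance_bound
    {Ω : Type*} [MeasurableSpace Ω] {μ : Measure Ω} [IsProbabilityMeasure μ]
    {H : Type*} [NormedAddCommGroup H] [InnerProductSpace ℝ H] [CompleteSpace H]
    [MeasurableSpace H] [BorelSpace H]
    {β G : ℝ} (hβ : 0 < β) (hG : 0 < G)
    {f : H → ℝ} (hdiff : Differentiable ℝ f)
    (hconv : ∀ x y : H,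
      f y ≥ f x + ⟪gradient f x, y - x⟫ + β / 2 * ‖y - x‖ ^ 2)
    {θstar : H} (hmin : ∀ x : H, f θstar ≤ f x)
    (θ g : ℕ → Ω → H)
    (hθmeas : ∀ n, Measurable (θ n))
    (hgmeas : ∀ n, Measurable (g n))
    (hrec : ∀ n : ℕ, 1 ≤ n → ∀ ω, θ (n + 1) ω = θ n ω - (1 / (β * n)) • g n ω)
    (hunbiased : ∀ n : ℕ, 1 ≤ n →
      μ[g n | MeasurableSpace.comap (θ n) inferInstance]
        =ᵐ[μ] fun ω => gradient f (θ n ω))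
    (hg2int : ∀ n : ℕ, 1 ≤ n → Integrable (fun ω => ‖g n ω‖ ^ 2) μ)
    (hg2 : ∀ n : ℕ, 1 ≤ n → ∫ ω, ‖g n ω‖ ^ 2 ∂μ ≤ G ^ 2)
    (hθint : ∀ n : ℕ, 1 ≤ n → Integrable (fun ω => ‖θ n ω - θstar‖ ^ 2) μ) :
    ∀ n : ℕ, 1 ≤ n → ∫ ω, ‖θ n ω - θstar‖ ^ 2 ∂μ ≤ 2 * G ^ 2 / (β ^ 2 * n) := by
  -- gradient is zero at the minimizer
  have hgrad0 : gradient f θstar = 0 := by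
    have hfd : fderiv ℝ f θstar = 0 :=
      IsLocalMin.fderiv_eq_zero (Filter.Eventually.of_forall hmin)
    show (InnerProductSpace.toDual ℝ H).symm (fderiv ℝ f θstar) = 0
    rw [hfd, map_zero]
  -- strong convexity gradient inequality
  have hkey : ∀ x : H, β * ‖x - θstar‖ ^ 2 ≤ ⟪gradient f x, x - θstar⟫ := by
    intro x
    have h1 := hconv x θstar
    have h2 := hconv θstar x
    rw [hgrad0, inner_zero_left] at h2
    rw [show θstar - x = -(x - θstar) from (neg_sub x θstar).symm, inner_neg_right,
      norm_neg] at h1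
    linarith
  -- one-step inequality
  have hstep : ∀ n : ℕ, 1 ≤ n →
      ∫ ω, ‖θ (n + 1) ω - θstar‖ ^ 2 ∂μ ≤
        ∫ ω, ‖θ n ω - θstar‖ ^ 2 ∂μ - (2 / (n : ℝ)) * ∫ ω, ‖θ n ω - θstar‖ ^ 2 ∂μ
          + G ^ 2 / (β ^ 2 * (n : ℝ) ^ 2) := by
    intro n hn
    have hNpos : (0:ℝ) < n := by exact_mod_cast hn
    set η : ℝ := 1 / (β * n) with hηdef
    have hηpos : 0 < η := by rw [hηdef]; positivity
    have hA := hθint n hn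
    have hB := hg2int n hn
    have hC := hθint (n + 1) (by omega)
    have P : ∀ ω, ‖θ (n + 1) ω - θstar‖ ^ 2
        = ‖θ n ω - θstar‖ ^ 2 - 2 * η * ⟪g n ω, θ n ω - θstar⟫ + η ^ 2 * ‖g n ω‖ ^ 2 := by
      intro ω
      rw [hrec n hn ω, ← hηdef,
        show θ n ω - η • g n ω - θstar = (θ n ω - θstar) - η • g n ω from by abel,
        norm_sub_sq_real, real_inner_smul_right, real_inner_comm, norm_smul,
        Real.norm_eq_abs, abs_of_pos hηpos]
      ring
    have hceq : (fun ω => ⟪g n ω, θ n ω - θstar⟫)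
        = fun ω => (‖θ n ω - θstar‖ ^ 2 + η ^ 2 * ‖g n ω‖ ^ 2
            - ‖θ (n + 1) ω - θstar‖ ^ 2) / (2 * η) := by
      funext ω
      have h := P ω
      rw [eq_div_iff (by positivity : (2 * η) ≠ 0)]
      linear_combination h
    have hc_int : Integrable (fun ω => ⟪g n ω, θ n ω - θstar⟫) μ := by
      rw [hceq]
      exact ((hA.add (hB.const_mul (η ^ 2))).sub hC).div_const (2 * η)
    have hKEY : β * ∫ ω, ‖θ n ω - θstar‖ ^ 2 ∂μ ≤ ∫ ω, ⟪g n ω, θ n ω - θstar⟫ ∂μ := by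
      have hm : MeasurableSpace.comap (θ n) inferInstance ≤ ‹MeasurableSpace Ω› :=
        measurable_iff_comap_le.mp (hθmeas n)
      by_cases hgint : Integrable (g n) μ
      · have hXm : Measurable[MeasurableSpace.comap (θ n) inferInstance]
            (fun ω => θ n ω - θstar) := by
          have hθm : Measurable[MeasurableSpace.comap (θ n) inferInstance] (θ n) :=
            fun s hs => ⟨s, hs, rfl⟩
          exact ((continuous_id.sub continuous_const).measurable).comp hθm
        have hgmem : MemLp (g n) 2 μ :=
          (memLp_two_iff_integrable_sq_norm hgint.1).mpr hB
        obtain ⟨heq, hint⟩ := sgd_aux_orth hm hgmem hgint hXm hA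
        rw [heq]
        have hae : ∀ᵐ ω ∂μ, β * ‖θ n ω - θstar‖ ^ 2 ≤
            ⟪(μ[g n | MeasurableSpace.comap (θ n) inferInstance]) ω, θ n ω - θstar⟫ := by
          filter_upwards [hunbiased n hn] with ω hω
          rw [hω]
          exact hkey (θ n ω)
        calc β * ∫ ω, ‖θ n ω - θstar‖ ^ 2 ∂μ
            = ∫ ω, β * ‖θ n ω - θstar‖ ^ 2 ∂μ := (integral_const_mul _ _).symm
          _ ≤ _ := integral_mono_ae (hA.const_mul β) hint hae
      · have h0 := hunbiased n hn
        rw [condExp_of_not_integrable hgint] at h0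
        have hX0 : ∀ᵐ ω ∂μ, θ n ω - θstar = 0 := by
          filter_upwards [h0] with ω hω
          have hk := hkey (θ n ω)
          rw [← hω] at hk
          simp only [Pi.zero_apply, inner_zero_left] at hk
          have h3 : ‖θ n ω - θstar‖ ^ 2 = 0 := by nlinarith [sq_nonneg ‖θ n ω - θstar‖]
          exact norm_eq_zero.mp (sq_eq_zero_iff.mp h3)
        have hI0 : ∫ ω, ‖θ n ω - θstar‖ ^ 2 ∂μ = 0 := by
          have : (fun ω => ‖θ n ω - θstar‖ ^ 2) =ᵐ[μ] 0 :=
            hX0.mono fun ω h => by simp [h]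
          rw [integral_congr_ae this]
          simp
        have hc0 : ∫ ω, ⟪g n ω, θ n ω - θstar⟫ ∂μ = 0 := by
          have : (fun ω => ⟪g n ω, θ n ω - θstar⟫) =ᵐ[μ] 0 :=
            hX0.mono fun ω h => by simp [h]
          rw [integral_congr_ae this]
          simp
        rw [hI0, hc0]
        simp
    have hfun : (fun ω => ‖θ (n + 1) ω - θstar‖ ^ 2) = fun ω =>
        ‖θ n ω - θstar‖ ^ 2 - 2 * η * ⟪g n ω, θ n ω - θstar⟫ + η ^ 2 * ‖g n ω‖ ^ 2 :=
      funext P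
    have hmulc : Integrable (fun ω => 2 * η * ⟪g n ω, θ n ω - θstar⟫) μ :=
      hc_int.const_mul (2 * η)
    have hsub : Integrable
        (fun ω => ‖θ n ω - θstar‖ ^ 2 - 2 * η * ⟪g n ω, θ n ω - θstar⟫) μ := hA.sub hmulc
    have hmulB : Integrable (fun ω => η ^ 2 * ‖g n ω‖ ^ 2) μ := hB.const_mul (η ^ 2)
    rw [hfun, integral_add hsub hmulB, integral_sub hA hmulc, integral_const_mul,
      integral_const_mul]
    have h1 : 2 * η * (β * ∫ ω, ‖θ n ω - θstar‖ ^ 2 ∂μ)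
        ≤ 2 * η * ∫ ω, ⟪g n ω, θ n ω - θstar⟫ ∂μ :=
      mul_le_mul_of_nonneg_left hKEY (by positivity)
    have h2 : η ^ 2 * ∫ ω, ‖g n ω‖ ^ 2 ∂μ ≤ η ^ 2 * G ^ 2 :=
      mul_le_mul_of_nonneg_left (hg2 n hn) (by positivity)
    have e1 : 2 * η * (β * ∫ ω, ‖θ n ω - θstar‖ ^ 2 ∂μ)
        = (2 / (n : ℝ)) * ∫ ω, ‖θ n ω - θstar‖ ^ 2 ∂μ := by
      rw [hηdef]
      field_simp
    have e2 : η ^ 2 * G ^ 2 = G ^ 2 / (β ^ 2 * (n : ℝ) ^ 2) := by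
      rw [hηdef]
      field_simp
    linarith
  have hI0 : ∀ k : ℕ, 0 ≤ ∫ ω, ‖θ k ω - θstar‖ ^ 2 ∂μ :=
    fun k => integral_nonneg fun ω => sq_nonneg _
  intro n hn
  induction n with
  | zero => omega
  | succ k ih =>
    rcases Nat.lt_or_ge k 1 with hk | hk
    · -- base case k = 0, i.e. n = 1
      have hk0 : k = 0 := by omega
      subst hk0
      have hs := hstep 1 le_rfl
      have h2 := hI0 2
      have h1 := hI0 1
      norm_num at hs ⊢
      have hb2 : (0:ℝ) < β ^ 2 := by positivity
      have hGb : (0:ℝ) ≤ G ^ 2 / β ^ 2 := by positivity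
      have hle : ∫ ω, ‖θ 1 ω - θstar‖ ^ 2 ∂μ ≤ G ^ 2 / β ^ 2 := by linarith
      calc ∫ ω, ‖θ 1 ω - θstar‖ ^ 2 ∂μ ≤ G ^ 2 / β ^ 2 := hle
        _ ≤ 2 * G ^ 2 / β ^ 2 := by
            rw [div_le_div_iff₀ hb2 hb2]
            nlinarith [sq_nonneg G, sq_nonneg β]
    · -- inductive step, k ≥ 1
      have ihk := ih hk
      have hs := hstep k hk
      have hN1 : (1:ℝ) ≤ (k:ℝ) := by exact_mod_cast hk
      have hNpos : (0:ℝ) < (k:ℝ) := by linarith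
      have hb2 : (0:ℝ) < β ^ 2 := by positivity
      push_cast
      push_cast at ihk
      rcases Nat.lt_or_ge k 2 with hk2 | hk2
      · -- k = 1
        have hk1 : k = 1 := by omega
        subst hk1
        have h1 := hI0 1
        norm_num at hs ⊢
        have e : 2 * G ^ 2 / (β ^ 2 * 2) = G ^ 2 / β ^ 2 := by
          field_simp
        rw [e]
        linarith
      · -- k ≥ 2
        have hN2 : (2:ℝ) ≤ (k:ℝ) := by exact_mod_cast hk2
        set N : ℝ := (k:ℝ) with hNdef
        set Ik := ∫ ω, ‖θ k ω - θstar‖ ^ 2 ∂μ with hIkdef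
        have hIknn := hI0 k
        have hcoef : (0:ℝ) ≤ 1 - 2 / N := by
          rw [sub_nonneg, div_le_one hNpos]
          linarith
        have step1 : (1 - 2 / N) * Ik ≤ (1 - 2 / N) * (2 * G ^ 2 / (β ^ 2 * N)) :=
          mul_le_mul_of_nonneg_left ihk hcoef
        have step2 : (1 - 2 / N) * (2 * G ^ 2 / (β ^ 2 * N)) + G ^ 2 / (β ^ 2 * N ^ 2)
            ≤ 2 * G ^ 2 / (β ^ 2 * (N + 1)) := by
          have e : (1 - 2 / N) * (2 * G ^ 2 / (β ^ 2 * N)) + G ^ 2 / (β ^ 2 * N ^ 2)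
              = (2 * N - 3) * G ^ 2 / (β ^ 2 * N ^ 2) := by
            field_simp
            ring
          rw [e, div_le_div_iff₀ (by positivity) (by positivity)]
          nlinarith [mul_nonneg (mul_nonneg (sq_nonneg β) (sq_nonneg G))
            (by linarith : (0:ℝ) ≤ N + 3)]
        linarith [hs, step1, step2]
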